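/- Let Ω > 0, T > 0 and s ∈ (0, T). Define h₁, h₂ : ℝ → ℝ by h₁(t) = (1/(2Ω))·(−1/(ΩT) + cosh(Ω(T + 2t − 2s))/sinh(ΩT)) and h₂(t) = h₁(t) − sinh(2Ω(t − s))/Ω. Then: (i) for every t ∈ ℝ, −(1/2)h₁''(t) + 2Ω²·h₁(t) = −1/T and −(1/2)h₂''(t) + 2Ω²·h₂(t) = −1/T; (ii) h₁(0) = h₂(T); (iii) h₂'(s) − h₁'(s) = −2; (iv) ∫₀ˢ h₁(t) dt + ∫ₛᵀ h₂(t) dt = 0. -/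

import Mathlib

private lemma hasDerivAt_cosh_affine (a b t : ℝ) :
    HasDerivAt (fun x : ℝ => Real.cosh (a * x + b)) (a * Real.sinh (a * t + b)) t := by
  have h : HasDerivAt (fun x : ℝ => a * x + b) a t := by
    simpa using ((hasDerivAt_id t).const_mul a).add_const b
  simpa [mul_comm] using h.cosh

private lemma hasDerivAt_sinh_affine (a b t : ℝ) :
    HasDerivAt (fun x : ℝ => Real.sinh (a * x + b)) (a * Real.cosh (a * t + b)) t := by
  have h : HasDerivAt (fun x : ℝ => a * x + b) a t := by
    simpa using ((hasDerivAt_id t).const_mul a).add_const b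
  simpa [mul_comm] using h.sinh

/-- The two branches of the string-inspired Green function of `−(1/2)d²/dt² + 2Ω²` on `[0, T]`:
the inhomogeneous equation with source `−1/T` on each branch, periodicity `h₁(0) = h₂(T)`,
the jump `−2` of the first derivative across `t = s`, and the vanishing average. -/
theorem string_inspired_green_function_properties (Ω T s : ℝ) (hΩ : 0 < Ω) (hT : 0 < T)
    (hs : s ∈ Set.Ioo 0 T) (h₁ h₂ : ℝ → ℝ)
    (hh₁ : h₁ = fun t => (1 / (2 * Ω)) *
      (-(1 / (Ω * T)) + Real.cosh (Ω * (T + 2 * t - 2 * s)) / Real.sinh (Ω * T)))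
    (hh₂ : h₂ = fun t => h₁ t - Real.sinh (2 * Ω * (t - s)) / Ω) :
    (∀ t : ℝ, -(1 / 2) * deriv (deriv h₁) t + 2 * Ω ^ 2 * h₁ t = -(1 / T) ∧
              -(1 / 2) * deriv (deriv h₂) t + 2 * Ω ^ 2 * h₂ t = -(1 / T)) ∧
    h₁ 0 = h₂ T ∧
    deriv h₂ s - deriv h₁ s = -2 ∧
    (∫ t in (0 : ℝ)..s, h₁ t) + (∫ t in s..T, h₂ t) = 0 := by
  have hΩ0 : Ω ≠ 0 := hΩ.ne'
  have hT0 : T ≠ 0 := hT.ne'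
  have hS0 : Real.sinh (Ω * T) ≠ 0 := (Real.sinh_pos_iff.2 (mul_pos hΩ hT)).ne'
  have hh₁' : h₁ = fun t => -(1 / (2 * Ω ^ 2 * T)) +
      (1 / (2 * Ω * Real.sinh (Ω * T))) * Real.cosh (2 * Ω * t + Ω * (T - 2 * s)) := by
    rw [hh₁]; funext t
    have e : Ω * (T + 2 * t - 2 * s) = 2 * Ω * t + Ω * (T - 2 * s) := by ring
    rw [e]; field_simp
  have hh₂' : h₂ = fun t => h₁ t - (1 / Ω) * Real.sinh (2 * Ω * t + -(2 * Ω * s)) := by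
    rw [hh₂]; funext t
    have e : 2 * Ω * (t - s) = 2 * Ω * t + -(2 * Ω * s) := by ring
    rw [e]; ring
  have H1 : ∀ t, HasDerivAt h₁
      ((1 / Real.sinh (Ω * T)) * Real.sinh (2 * Ω * t + Ω * (T - 2 * s))) t := by
    intro t
    rw [hh₁']
    have := ((hasDerivAt_cosh_affine (2 * Ω) (Ω * (T - 2 * s)) t).const_mul
      (1 / (2 * Ω * Real.sinh (Ω * T)))).const_add (-(1 / (2 * Ω ^ 2 * T)))
    convert this using 1
    · rfl
    · rfl
    field_simp
  have H2 : ∀ t, HasDerivAt h₂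
      ((1 / Real.sinh (Ω * T)) * Real.sinh (2 * Ω * t + Ω * (T - 2 * s)) -
        2 * Real.cosh (2 * Ω * t + -(2 * Ω * s))) t := by
    intro t
    rw [hh₂']
    have := (H1 t).sub ((hasDerivAt_sinh_affine (2 * Ω) (-(2 * Ω * s)) t).const_mul (1 / Ω))
    convert this using 1
    · rfl
    · rfl
    · rfl
    field_simp
  have d1 : deriv h₁ = fun t =>
      (1 / Real.sinh (Ω * T)) * Real.sinh (2 * Ω * t + Ω * (T - 2 * s)) :=
    funext fun t => (H1 t).deriv
  have d2 : deriv h₂ = fun t =>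
      (1 / Real.sinh (Ω * T)) * Real.sinh (2 * Ω * t + Ω * (T - 2 * s)) -
        2 * Real.cosh (2 * Ω * t + -(2 * Ω * s)) :=
    funext fun t => (H2 t).deriv
  have DD1 : ∀ t, HasDerivAt (deriv h₁)
      ((1 / Real.sinh (Ω * T)) * (2 * Ω * Real.cosh (2 * Ω * t + Ω * (T - 2 * s)))) t := by
    intro t; rw [d1]
    exact (hasDerivAt_sinh_affine _ _ t).const_mul _
  have DD2 : ∀ t, HasDerivAt (deriv h₂)
      ((1 / Real.sinh (Ω * T)) * (2 * Ω * Real.cosh (2 * Ω * t + Ω * (T - 2 * s))) -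
        2 * (2 * Ω * Real.sinh (2 * Ω * t + -(2 * Ω * s)))) t := by
    intro t; rw [d2]
    exact ((hasDerivAt_sinh_affine _ _ t).const_mul _).sub
      ((hasDerivAt_cosh_affine _ _ t).const_mul 2)
  refine ⟨fun t => ⟨?_, ?_⟩, ?_, ?_, ?_⟩
  · rw [(DD1 t).deriv, hh₁']
    field_simp; ring
  · rw [(DD2 t).deriv, hh₂', hh₁']
    field_simp; ring
  · rw [hh₂', hh₁']
    simp only
    have e1 : 2 * Ω * (0:ℝ) + Ω * (T - 2 * s) = 2 * Ω * (T - s) - Ω * T := by ring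
    have e2 : 2 * Ω * T + Ω * (T - 2 * s) = 2 * Ω * (T - s) + Ω * T := by ring
    have e3 : 2 * Ω * T + -(2 * Ω * s) = 2 * Ω * (T - s) := by ring
    rw [e1, e2, e3, Real.cosh_sub, Real.cosh_add]
    field_simp; ring
  · rw [d1, d2]
    simp only
    have e : 2 * Ω * s + -(2 * Ω * s) = 0 := by ring
    rw [e, Real.cosh_zero]; ring
  · have hc1 : Continuous h₁ := by rw [hh₁]; fun_prop
    have hc2 : Continuous h₂ := by rw [hh₂]; fun_prop
    have HF1 : ∀ t, HasDerivAt (fun t => -(t / (2 * Ω ^ 2 * T)) +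
        (1 / (4 * Ω ^ 2 * Real.sinh (Ω * T))) * Real.sinh (2 * Ω * t + Ω * (T - 2 * s)))
        (h₁ t) t := by
      intro t
      have := (((hasDerivAt_id t).div_const (2 * Ω ^ 2 * T)).neg).add
        ((hasDerivAt_sinh_affine (2 * Ω) (Ω * (T - 2 * s)) t).const_mul
          (1 / (4 * Ω ^ 2 * Real.sinh (Ω * T))))
      convert this using 1
      · rfl
      · rfl
      · rfl
      rw [hh₁']
      field_simp; ring
    have HF2 : ∀ t, HasDerivAt (fun t => (-(t / (2 * Ω ^ 2 * T)) +
        (1 / (4 * Ω ^ 2 * Real.sinh (Ω * T))) * Real.sinh (2 * Ω * t + Ω * (T - 2 * s))) -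
        (1 / (2 * Ω ^ 2)) * Real.cosh (2 * Ω * t + -(2 * Ω * s)))
        (h₂ t) t := by
      intro t
      have := (HF1 t).sub ((hasDerivAt_cosh_affine (2 * Ω) (-(2 * Ω * s)) t).const_mul
        (1 / (2 * Ω ^ 2)))
      convert this using 1
      · rfl
      · rfl
      · rfl
      rw [hh₂']
      field_simp
    rw [intervalIntegral.integral_eq_sub_of_hasDerivAt (fun t _ => HF1 t)
        (hc1.intervalIntegrable _ _),
      intervalIntegral.integral_eq_sub_of_hasDerivAt (fun t _ => HF2 t)
        (hc2.intervalIntegrable _ _)]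
    have e1 : 2 * Ω * s + Ω * (T - 2 * s) = Ω * T := by ring
    have e2 : 2 * Ω * (0:ℝ) + Ω * (T - 2 * s) = 2 * Ω * (T - s) - Ω * T := by ring
    have e3 : 2 * Ω * T + Ω * (T - 2 * s) = 2 * Ω * (T - s) + Ω * T := by ring
    have e4 : 2 * Ω * T + -(2 * Ω * s) = 2 * Ω * (T - s) := by ring
    have e5 : 2 * Ω * s + -(2 * Ω * s) = 0 := by ring
    rw [e1, e2, e3, e4, e5, Real.sinh_add, Real.sinh_sub, Real.cosh_zero]
    field_simp; ring
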